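/- Let g ∈ ℝ^n, let H : ℝ^n → ℝ^n be a linear map, and let δ > 0. Then inf{ ⟨g, d⟩ + (1/2) ⟨H d, d⟩ : d ∈ ℝ^n, ‖d‖ ≤ δ } = 0 if and only if g = 0 and ⟨H d, d⟩ ≥ 0 for every d ∈ ℝ^n. -/

import Mathlib

open scoped RealInnerProductSpace

/-- For `g ∈ ℝ^n`, a linear map `H : ℝ^n → ℝ^n` and `δ > 0`,
`inf{ ⟨g,d⟩ + ½⟨Hd,d⟩ : ‖d‖ ≤ δ } = 0` iff `g = 0` and `⟨Hd,d⟩ ≥ 0` for all `d`. -/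
theorem stmt14 {n : ℕ} (g : EuclideanSpace ℝ (Fin n))
    (H : EuclideanSpace ℝ (Fin n) →ₗ[ℝ] EuclideanSpace ℝ (Fin n))
    (δ : ℝ) (hδ : 0 < δ) :
    sInf ((fun d : EuclideanSpace ℝ (Fin n) => ⟪g, d⟫ + (1 / 2) * ⟪H d, d⟫) ''
        {d | ‖d‖ ≤ δ}) = 0 ↔
      (g = 0 ∧ ∀ d : EuclideanSpace ℝ (Fin n), 0 ≤ ⟪H d, d⟫) := by
  set f : EuclideanSpace ℝ (Fin n) → ℝ := fun d => ⟪g, d⟫ + (1 / 2) * ⟪H d, d⟫ with hf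
  have hHc : Continuous fun d : EuclideanSpace ℝ (Fin n) => H d :=
    H.continuous_of_finiteDimensional
  have hcont : Continuous f := by
    apply Continuous.add
    · exact continuous_const.inner continuous_id
    · exact continuous_const.mul (hHc.inner continuous_id)
  have hset : {d : EuclideanSpace ℝ (Fin n) | ‖d‖ ≤ δ} = Metric.closedBall 0 δ := by
    ext d; simp [Metric.mem_closedBall, dist_zero_right]
  have hcomp : IsCompact (f '' {d | ‖d‖ ≤ δ}) := by
    rw [hset]; exact (isCompact_closedBall 0 δ).image hcont
  have hbdd : BddBelow (f '' {d | ‖d‖ ≤ δ}) := hcomp.bddBelow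
  have h0mem : (0 : ℝ) ∈ f '' {d | ‖d‖ ≤ δ} :=
    ⟨0, by simp [hδ.le], by simp [hf]⟩
  constructor
  · intro hinf
    have hle : ∀ d : EuclideanSpace ℝ (Fin n), ‖d‖ ≤ δ → 0 ≤ f d := by
      intro d hd
      have h := csInf_le hbdd ⟨d, hd, rfl⟩
      rw [hinf] at h
      exact h
    have hg : g = 0 := by
      by_contra hgne
      have hng : 0 < ‖g‖ := norm_pos_iff.mpr hgne
      set c : ℝ := ⟪H g, g⟫ with hc
      set t : ℝ := min (δ / ‖g‖) (‖g‖ ^ 2 / (|c| + 1)) with ht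
      have hcpos : 0 < |c| + 1 := by positivity
      have htpos : 0 < t :=
        lt_min (div_pos hδ hng) (div_pos (by positivity) hcpos)
      have htle : t ≤ δ / ‖g‖ := min_le_left _ _
      have htle2 : t ≤ ‖g‖ ^ 2 / (|c| + 1) := min_le_right _ _
      have hnorm : ‖(-t) • g‖ ≤ δ := by
        rw [norm_smul, Real.norm_eq_abs, abs_neg, abs_of_pos htpos]
        calc t * ‖g‖ ≤ (δ / ‖g‖) * ‖g‖ := by nlinarith
          _ = δ := by field_simp
      have hval : f ((-t) • g) = -t * ‖g‖ ^ 2 + (1 / 2) * (t ^ 2 * c) := by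
        simp only [hf, map_smul, real_inner_smul_left, real_inner_smul_right,
          real_inner_self_eq_norm_sq]
        ring
      have h0 := hle _ hnorm
      rw [hval] at h0
      -- t * c < 2 * ‖g‖^2, derive contradiction
      have htc : t * c ≤ t * |c| := by
        have := le_abs_self c
        nlinarith
      have h2 : t * |c| < ‖g‖ ^ 2 := by
        have h3 : t * (|c| + 1) ≤ ‖g‖ ^ 2 := (le_div_iff₀ hcpos).mp htle2
        nlinarith [abs_nonneg c]
      nlinarith
    refine ⟨hg, fun d => ?_⟩
    rcases eq_or_ne d 0 with rfl | hd0
    · simp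
    · have hnd : 0 < ‖d‖ := norm_pos_iff.mpr hd0
      set s : ℝ := δ / ‖d‖ with hs
      have hspos : 0 < s := div_pos hδ hnd
      have hnorm : ‖s • d‖ ≤ δ := by
        rw [norm_smul, Real.norm_eq_abs, abs_of_pos hspos, hs]
        field_simp
        exact le_rfl
      have h0 := hle _ hnorm
      have hval : f (s • d) = (1 / 2) * (s ^ 2 * ⟪H d, d⟫) := by
        simp only [hf, hg, map_smul, real_inner_smul_left, real_inner_smul_right,
          inner_zero_left]
        ring
      rw [hval] at h0
      nlinarith [pow_pos hspos 2]
  · rintro ⟨hg, hpsd⟩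
    apply le_antisymm
    · exact csInf_le hbdd h0mem
    · apply le_csInf ⟨0, h0mem⟩
      rintro x ⟨d, _, rfl⟩
      have := hpsd d
      simp only [hf, hg, inner_zero_left]
      nlinarith
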